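/- Suppose the ISS-Lyapunov assumption holds with class-K∞ functions α̲, ᾱ, α, γ₁,…,γ_N, θ. Let γ̃₁,…,γ̃_N be class-K∞ functions such that for each i, γᵢ(r) = O(γ̃ᵢ(r)) as r → ∞ (i.e., there exist Mᵢ > 0 and rᵢ ≥ 0 with γᵢ(r) ≤ Mᵢγ̃ᵢ(r) for all r ≥ rᵢ). Then there exist a continuously differentiable W : ℝ^{n_x}×ℝ^{n_z} → [0,∞) and class-K∞ functions α̲_W, ᾱ_W, α̃, θ̃ such that for all x, z, u, v and e = (e₁,…,e_N): α̲_W(|x−ψ(z)|) ≤ W(x,z) ≤ ᾱ_W(|ψ^{-R}(x)−z|) and ⟨∇W(x,z), (f_p(x,u,v), f_o(z,u,h(x)+e, h(ψ(z))))⟩ ≤ −α̃(W(x,z)) + Σ_{i=1}^N γ̃ᵢ(|eᵢ|) + θ̃(|v|). -/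

import Mathlib

open Real Filter MeasureTheory

/-- A class-K∞ function: continuous, strictly increasing and unbounded on `[0,∞)`
with value `0` at `0`. -/
def ClassKInf (f : ℝ → ℝ) : Prop :=
  ContinuousOn f (Set.Ici 0) ∧ StrictMonoOn f (Set.Ici 0) ∧ f 0 = 0 ∧
  Filter.Tendsto f Filter.atTop Filter.atTop

namespace Stmt10Aux

noncomputable def ext (f : ℝ → ℝ) : ℝ → ℝ := fun x => f (max x 0) + min x 0

variable {f : ℝ → ℝ}

lemma ext_of_nonneg (x : ℝ) (hx : 0 ≤ x) : ext f x = f x := by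
  simp [ext, max_eq_left hx, min_eq_right hx]

lemma ext_zero (hf0 : f 0 = 0) : ext f 0 = 0 := by
  simp [ext, hf0]

lemma ext_continuous (hf : ClassKInf f) : Continuous (ext f) := by
  have h1 : Continuous fun x : ℝ => f (max x 0) :=
    hf.1.comp_continuous (continuous_id.max continuous_const)
      (fun x => Set.mem_Ici.2 (le_max_right _ _))
  exact h1.add (continuous_id.min continuous_const)

lemma ext_strictMono (hf : ClassKInf f) : StrictMono (ext f) := by
  intro x y hxy
  unfold ext
  rcases le_or_gt y 0 with hy | hy
  · have hx : x < 0 := hxy.trans_le hy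
    rw [max_eq_right hx.le, max_eq_right hy, min_eq_left hx.le, min_eq_left hy]
    exact add_lt_add_right hxy _
  · rcases le_or_gt 0 x with hx | hx
    · have h1 : f (max x 0) < f (max y 0) := by
        rw [max_eq_left hx, max_eq_left hy.le]
        exact hf.2.1 (Set.mem_Ici.2 hx) (Set.mem_Ici.2 hy.le) hxy
      exact add_lt_add_of_lt_of_le h1 (min_le_min hxy.le le_rfl)
    · have h1 : f (max x 0) < f (max y 0) := by
        rw [max_eq_right hx.le, max_eq_left hy.le]
        exact hf.2.1 (Set.mem_Ici.2 le_rfl) (Set.mem_Ici.2 hy.le) hy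
      exact add_lt_add_of_lt_of_le h1 (min_le_min hxy.le le_rfl)

lemma ext_tendsto_atTop (hf : ClassKInf f) : Tendsto (ext f) atTop atTop := by
  apply hf.2.2.2.congr'
  filter_upwards [eventually_ge_atTop (0:ℝ)] with x hx
  rw [ext_of_nonneg x hx]

lemma ext_tendsto_atBot (hf : ClassKInf f) : Tendsto (ext f) atBot atBot := by
  apply tendsto_id.congr'
  filter_upwards [eventually_le_atBot (0:ℝ)] with x hx
  simp [ext, max_eq_right hx, min_eq_left hx, hf.2.2.1]

lemma exists_inv {F : ℝ → ℝ} (hc : Continuous F) (hm : StrictMono F)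
    (ht : Tendsto F atTop atTop) (hb : Tendsto F atBot atBot) :
    ∃ G : ℝ → ℝ, Continuous G ∧ StrictMono G ∧ (∀ x, G (F x) = x) ∧ (∀ y, F (G y) = y) ∧
      Tendsto G atTop atTop := by
  have hsurj : Function.Surjective F := hc.surjective ht hb
  let e := StrictMono.orderIsoOfSurjective F hm hsurj
  refine ⟨e.symm, e.symm.continuous, e.symm.strictMono, ?_, ?_, ?_⟩
  · exact fun x => StrictMono.orderIsoOfSurjective_symm_apply_self F hm hsurj x
  · exact fun y => StrictMono.orderIsoOfSurjective_self_symm_apply F hm hsurj y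
  · refine tendsto_atTop_atTop_of_monotone e.symm.monotone (fun b => ⟨F b, ?_⟩)
    rw [StrictMono.orderIsoOfSurjective_symm_apply_self F hm hsurj b]

lemma knonneg (hf : ClassKInf f) {r : ℝ} (hr : 0 ≤ r) : 0 ≤ f r := by
  rw [← hf.2.2.1]
  exact hf.2.1.monotoneOn (Set.mem_Ici.2 le_rfl) (Set.mem_Ici.2 hr) hr

lemma kpos (hf : ClassKInf f) {r : ℝ} (hr : 0 < r) : 0 < f r := by
  rw [← hf.2.2.1]
  exact hf.2.1 (Set.mem_Ici.2 le_rfl) (Set.mem_Ici.2 hr.le) hr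

end Stmt10Aux

/-- Remark 1 of the paper: under the ISS-Lyapunov assumption, the gains `γᵢ` may
be replaced by any class-K∞ gains `γ̃ᵢ` dominating them at infinity, at the price
of a new Lyapunov function `W` and new decay/disturbance rates `α̃`, `θ̃`. -/
theorem stmt10
    (N nx nz nu nv : ℕ) (hN : 0 < N) (ny : Fin N → ℕ)
    (fp : EuclideanSpace ℝ (Fin nx) → EuclideanSpace ℝ (Fin nu) →
      EuclideanSpace ℝ (Fin nv) → EuclideanSpace ℝ (Fin nx))
    (fo : EuclideanSpace ℝ (Fin nz) → EuclideanSpace ℝ (Fin nu) →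
      (PiLp 2 fun i : Fin N => EuclideanSpace ℝ (Fin (ny i))) →
      (PiLp 2 fun i : Fin N => EuclideanSpace ℝ (Fin (ny i))) →
      EuclideanSpace ℝ (Fin nz))
    (h : EuclideanSpace ℝ (Fin nx) →
      PiLp 2 fun i : Fin N => EuclideanSpace ℝ (Fin (ny i)))
    (ψ : EuclideanSpace ℝ (Fin nz) → EuclideanSpace ℝ (Fin nx))
    (ψR : EuclideanSpace ℝ (Fin nx) → EuclideanSpace ℝ (Fin nz))
    -- ISS-Lyapunov assumption (Assumption 2)
    (V : EuclideanSpace ℝ (Fin nx) × EuclideanSpace ℝ (Fin nz) → ℝ)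
    (αlow αup α θ : ℝ → ℝ) (γ : Fin N → ℝ → ℝ)
    (hV1 : ContDiff ℝ 1 V) (hV0 : ∀ p, 0 ≤ V p)
    (hαlow : ClassKInf αlow) (hαup : ClassKInf αup) (hα : ClassKInf α)
    (hθ : ClassKInf θ) (hγ : ∀ i, ClassKInf (γ i))
    (hVb : ∀ (x : EuclideanSpace ℝ (Fin nx)) (z : EuclideanSpace ℝ (Fin nz)),
      αlow ‖x - ψ z‖ ≤ V (x, z) ∧ V (x, z) ≤ αup ‖ψR x - z‖)
    (hVflow : ∀ (x : EuclideanSpace ℝ (Fin nx)) (z : EuclideanSpace ℝ (Fin nz))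
      (u : EuclideanSpace ℝ (Fin nu)) (v : EuclideanSpace ℝ (Fin nv))
      (e : PiLp 2 fun i : Fin N => EuclideanSpace ℝ (Fin (ny i))),
      fderiv ℝ V (x, z) (fp x u v, fo z u (h x + e) (h (ψ z))) ≤
        -α (V (x, z)) + (∑ i, γ i ‖e i‖) + θ ‖v‖)
    (γt : Fin N → ℝ → ℝ) (hγt : ∀ i, ClassKInf (γt i))
    (hO : ∀ i, ∃ M > (0:ℝ), ∃ r₀ ≥ (0:ℝ), ∀ r ≥ r₀, γ i r ≤ M * γt i r) :
    ∃ (W : EuclideanSpace ℝ (Fin nx) × EuclideanSpace ℝ (Fin nz) → ℝ)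
      (αlowW αupW αt θt : ℝ → ℝ),
      ContDiff ℝ 1 W ∧ (∀ p, 0 ≤ W p) ∧
      ClassKInf αlowW ∧ ClassKInf αupW ∧ ClassKInf αt ∧ ClassKInf θt ∧
      (∀ (x : EuclideanSpace ℝ (Fin nx)) (z : EuclideanSpace ℝ (Fin nz)),
        αlowW ‖x - ψ z‖ ≤ W (x, z) ∧ W (x, z) ≤ αupW ‖ψR x - z‖) ∧
      (∀ (x : EuclideanSpace ℝ (Fin nx)) (z : EuclideanSpace ℝ (Fin nz))
        (u : EuclideanSpace ℝ (Fin nu)) (v : EuclideanSpace ℝ (Fin nv))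
        (e : PiLp 2 fun i : Fin N => EuclideanSpace ℝ (Fin (ny i))),
        fderiv ℝ W (x, z) (fp x u v, fo z u (h x + e) (h (ψ z))) ≤
          -αt (W (x, z)) + (∑ i, γt i ‖e i‖) + θt ‖v‖) := by
  classical
  haveI : Nonempty (Fin N) := ⟨⟨0, hN⟩⟩
  set i0 : Fin N := ⟨0, hN⟩ with hi0
  choose M hMpos r₀ hr₀ hdom using hO
  have hNpos : (0:ℝ) < N := by exact_mod_cast hN
  have h2N : (0:ℝ) < 2 * N := by nlinarith
  -- extended α
  set A := Stmt10Aux.ext α with hAdef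
  have hAc : Continuous A := Stmt10Aux.ext_continuous hα
  have hAm : StrictMono A := Stmt10Aux.ext_strictMono hα
  have hAtop : Tendsto A atTop atTop := Stmt10Aux.ext_tendsto_atTop hα
  have hA0 : A 0 = 0 := Stmt10Aux.ext_zero hα.2.2.1
  have hAeq : ∀ x : ℝ, 0 ≤ x → A x = α x := fun x hx => Stmt10Aux.ext_of_nonneg x hx
  have hAnn : ∀ x : ℝ, 0 ≤ x → 0 ≤ A x := fun x hx => by
    rw [← hA0]; exact hAm.monotone hx
  -- extended γ i and inverses
  have hGm : ∀ i, StrictMono (Stmt10Aux.ext (γ i)) := fun i => Stmt10Aux.ext_strictMono (hγ i)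
  have hGeq : ∀ i (x : ℝ), 0 ≤ x → Stmt10Aux.ext (γ i) x = γ i x :=
    fun i x hx => Stmt10Aux.ext_of_nonneg x hx
  have hG0 : ∀ i, Stmt10Aux.ext (γ i) 0 = 0 := fun i => Stmt10Aux.ext_zero (hγ i).2.2.1
  choose Ginv hGinvC hGinvM hGinvL hGinvR hGinvT using fun i =>
    Stmt10Aux.exists_inv (Stmt10Aux.ext_continuous (hγ i)) (hGm i)
      (Stmt10Aux.ext_tendsto_atTop (hγ i)) (Stmt10Aux.ext_tendsto_atBot (hγ i))
  have hGinv0 : ∀ i, Ginv i 0 = 0 := fun i => by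
    have := hGinvL i 0; rwa [hG0 i] at this
  -- extended γt i
  set Gt : Fin N → ℝ → ℝ := fun i => Stmt10Aux.ext (γt i) with hGtdef
  have hGtc : ∀ i, Continuous (Gt i) := fun i => Stmt10Aux.ext_continuous (hγt i)
  have hGtm : ∀ i, StrictMono (Gt i) := fun i => Stmt10Aux.ext_strictMono (hγt i)
  have hGteq : ∀ i (x : ℝ), 0 ≤ x → Gt i x = γt i x := fun i x hx => Stmt10Aux.ext_of_nonneg x hx
  have hGt0 : ∀ i, Gt i 0 = 0 := fun i => Stmt10Aux.ext_zero (hγt i).2.2.1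
  have hGtnn : ∀ i (x : ℝ), 0 ≤ x → 0 ≤ Gt i x := fun i x hx => by
    rw [← hGt0 i]; exact (hGtm i).monotone hx
  -- the damping factor q
  set c : Fin N → ℝ := fun i => max (γ i (r₀ i)) 1 with hcdef
  have hcpos : ∀ i, 0 < c i := fun i => lt_of_lt_of_le one_pos (le_max_right _ _)
  set g : Fin N → ℝ → ℝ := fun i s =>
    min (Gt i (Ginv i (A (max s 0) / (2 * N))) / c i) (M i)⁻¹ with hgdef
  have hgC : ∀ i, Continuous (g i) := by
    intro i
    apply Continuous.min _ continuous_const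
    exact ((hGtc i).comp ((hGinvC i).comp
      ((hAc.comp (continuous_id.max continuous_const)).div_const _))).div_const _
  have hgM : ∀ i, Monotone (g i) := by
    intro i s t hst
    apply min_le_min _ le_rfl
    rw [div_le_div_iff_of_pos_right (hcpos i)]
    exact (hGtm i).monotone ((hGinvM i).monotone
      (by rw [div_le_div_iff_of_pos_right h2N]
          exact hAm.monotone (max_le_max hst le_rfl)))
  have hgzero : ∀ i (s : ℝ), s ≤ 0 → g i s = 0 := by
    intro i s hs
    simp only [hgdef, max_eq_right hs, hA0, zero_div, hGinv0 i, hGt0 i]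
    exact min_eq_left (inv_nonneg.2 (hMpos i).le)
  have hgnn : ∀ i (s : ℝ), 0 ≤ g i s := by
    intro i s
    rcases le_or_gt s 0 with hs | hs
    · rw [hgzero i s hs]
    · rw [← hgzero i 0 le_rfl]; exact hgM i hs.le
  have hgpos : ∀ i (s : ℝ), 0 < s → 0 < g i s := by
    intro i s hs
    apply lt_min _ (inv_pos.2 (hMpos i))
    apply div_pos _ (hcpos i)
    have h1 : 0 < A (max s 0) := by
      rw [max_eq_left hs.le, ← hA0]; exact hAm hs
    have h2 : 0 < A (max s 0) / (2 * N) := div_pos h1 h2N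
    have h3 : 0 < Ginv i (A (max s 0) / (2 * N)) := by
      have := hGinvM i h2
      rwa [hGinv0 i] at this
    have h4 := hGtm i h3
    rwa [hGt0 i] at h4
  set q : ℝ → ℝ := fun s => Finset.univ.inf' Finset.univ_nonempty (fun i => g i s) with hqdef
  have hqC : Continuous q := by
    rw [continuous_iff_continuousAt]
    intro x
    exact ContinuousAt.finset_inf'_apply _ (fun i _ => (hgC i).continuousAt)
  have hqM : Monotone q := by
    intro s t hst
    refine Finset.le_inf' _ _ (fun i _ => ?_)
    exact le_trans (Finset.inf'_le _ (Finset.mem_univ i)) (hgM i hst)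
  have hqle : ∀ (s : ℝ) i, q s ≤ g i s := fun s i => Finset.inf'_le _ (Finset.mem_univ i)
  have hqnn : ∀ s : ℝ, 0 ≤ q s := fun s => Finset.le_inf' _ _ (fun i _ => hgnn i s)
  have hqzero : ∀ s : ℝ, s ≤ 0 → q s = 0 := fun s hs =>
    le_antisymm (by rw [← hgzero i0 s hs]; exact hqle s i0) (hqnn s)
  have hqpos : ∀ s : ℝ, 0 < s → 0 < q s := fun s hs =>
    (Finset.lt_inf'_iff _).2 fun i _ => hgpos i s hs
  have hqleM : ∀ (s : ℝ) i, q s ≤ (M i)⁻¹ := fun s i =>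
    (hqle s i).trans (min_le_right _ _)
  have hqleG : ∀ (s : ℝ), 0 ≤ s → ∀ i, q s ≤ Gt i (Ginv i (A s / (2 * N))) / c i := by
    intro s hs i
    have := (hqle s i).trans (min_le_left _ _)
    rwa [max_eq_left hs] at this
  -- the rescaling ρ
  set ρ : ℝ → ℝ := fun s => ∫ t in (0:ℝ)..s, q t with hρdef
  have hρd : ∀ s, HasDerivAt ρ (q s) s := fun s => (hqC.integral_hasStrictDerivAt 0 s).hasDerivAt
  have hρ1 : ContDiff ℝ 1 ρ := by
    rw [contDiff_one_iff_deriv]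
    refine ⟨fun s => (hρd s).differentiableAt, ?_⟩
    have : deriv ρ = q := funext fun s => (hρd s).deriv
    rw [this]; exact hqC
  have hρ0 : ρ 0 = 0 := intervalIntegral.integral_same
  have hint : ∀ a b : ℝ, IntervalIntegrable q volume a b := fun a b => hqC.intervalIntegrable a b
  have hρsub : ∀ x y : ℝ, ρ y - ρ x = ∫ t in x..y, q t := by
    intro x y
    have := intervalIntegral.integral_add_adjacent_intervals (hint 0 x) (hint x y)
    simp only [hρdef]; linarith [this]
  have hρmono : Monotone ρ := by
    intro x y hxy
    have h1 := hρsub x y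
    have h2 : 0 ≤ ∫ t in x..y, q t := intervalIntegral.integral_nonneg hxy (fun t _ => hqnn t)
    linarith
  have hρsm : StrictMonoOn ρ (Set.Ici 0) := by
    intro x hx y _ hxy
    have h1 := hρsub x y
    have h2 : 0 < ∫ t in x..y, q t :=
      intervalIntegral.intervalIntegral_pos_of_pos_on (hint x y)
        (fun t ht => hqpos t (lt_of_le_of_lt hx ht.1)) hxy
    linarith
  have hρtop : Tendsto ρ atTop atTop := by
    have hlin : Tendsto (fun s : ℝ => ρ 1 + (s - 1) * q 1) atTop atTop := by
      apply tendsto_atTop_add_const_left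
      exact (tendsto_atTop_add_const_right _ (-1) tendsto_id).atTop_mul_const (hqpos 1 one_pos)
    refine tendsto_atTop_mono' atTop ?_ hlin
    filter_upwards [eventually_ge_atTop (1:ℝ)] with s hs
    have h1 : ∫ t in (1:ℝ)..s, q 1 ≤ ∫ t in (1:ℝ)..s, q t :=
      intervalIntegral.integral_mono_on hs intervalIntegrable_const (hint 1 s)
        (fun t ht => hqM ht.1)
    have h2 : ∫ t in (1:ℝ)..s, q 1 = (s - 1) * q 1 := by
      rw [intervalIntegral.integral_const]; simp [smul_eq_mul]
    have h3 := hρsub 1 s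
    linarith
  have hρzero : ∀ s : ℝ, s ≤ 0 → ρ s = 0 := by
    intro s hs
    have hz : ∀ t ∈ Set.uIcc (0:ℝ) s, q t = 0 := by
      intro t ht
      rcases Set.mem_uIcc.1 ht with h1 | h1
      · exact hqzero t (h1.2.trans hs)
      · exact hqzero t h1.2
    calc ρ s = ∫ t in (0:ℝ)..s, (0:ℝ) := intervalIntegral.integral_congr hz
    _ = 0 := by simp
  have hρnn : ∀ s : ℝ, 0 ≤ ρ s := fun s => by
    rcases le_or_gt s 0 with hs | hs
    · rw [hρzero s hs]
    · rw [← hρ0]; exact hρmono hs.le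
  -- P and its inverse
  set P : ℝ → ℝ := fun s => ρ s + min s 0 with hPdef
  have hPc : Continuous P := (hρ1.continuous).add (continuous_id.min continuous_const)
  have hPsm : StrictMono P := by
    intro x y hxy
    rcases le_or_gt 0 x with hx | hx
    · have h1 : ρ x < ρ y := hρsm hx (Set.mem_Ici.2 (hx.trans hxy.le)) hxy
      exact add_lt_add_of_lt_of_le h1 (min_le_min hxy.le le_rfl)
    · have hm : min x 0 < min y 0 := by
        rw [min_eq_left hx.le]
        rcases le_or_gt y 0 with hy | hy
        · rw [min_eq_left hy]; exact hxy
        · rw [min_eq_right hy.le]; exact hx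
      exact add_lt_add_of_le_of_lt (hρmono hxy.le) hm
  have hPeq : ∀ s : ℝ, 0 ≤ s → P s = ρ s := by
    intro s hs
    simp [hPdef, min_eq_right hs]
  have hPtop : Tendsto P atTop atTop := by
    apply hρtop.congr'
    filter_upwards [eventually_ge_atTop (0:ℝ)] with s hs
    rw [hPeq s hs]
  have hPbot : Tendsto P atBot atBot := by
    apply tendsto_id.congr'
    filter_upwards [eventually_le_atBot (0:ℝ)] with s hs
    simp [hPdef, hρzero s hs, min_eq_left hs]
  obtain ⟨Pinv, hPinvC, hPinvM, hPinvL, hPinvR, hPinvT⟩ :=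
    Stmt10Aux.exists_inv hPc hPsm hPtop hPbot
  have hP0 : P 0 = 0 := by simp [hPdef, hρ0]
  have hPinv0 : Pinv 0 = 0 := by
    have := hPinvL 0; rwa [hP0] at this
  have hPinvρ : ∀ s : ℝ, 0 ≤ s → Pinv (ρ s) = s := by
    intro s hs
    rw [← hPeq s hs]; exact hPinvL s
  have hPinvnn : ∀ t : ℝ, 0 ≤ t → 0 ≤ Pinv t := by
    intro t ht
    rw [← hPinv0]; exact hPinvM.monotone ht
  -- the new Lyapunov data
  set W : EuclideanSpace ℝ (Fin nx) × EuclideanSpace ℝ (Fin nz) → ℝ := fun p => ρ (V p)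
    with hWdef
  set αt : ℝ → ℝ := fun t => q (Pinv t) * A (Pinv t) / 2 with hαtdef
  set θt : ℝ → ℝ := fun r => (M i0)⁻¹ * θ r with hθtdef
  have hαtKey : ∀ s : ℝ, 0 ≤ s → αt (ρ s) = q s * α s / 2 := by
    intro s hs
    simp only [hαtdef, hPinvρ s hs, hAeq s hs]
  have hqA_mono : StrictMonoOn (fun s => q s * A s / 2) (Set.Ici 0) := by
    intro s1 hs1 s2 _ h12
    have hs1' : (0:ℝ) ≤ s1 := hs1
    have hq2 : 0 < q s2 := hqpos s2 (lt_of_le_of_lt hs1' h12)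
    have hA1 : 0 ≤ A s1 := hAnn s1 hs1'
    have step1 : q s1 * A s1 ≤ q s2 * A s1 := mul_le_mul_of_nonneg_right (hqM h12.le) hA1
    have step2 : q s2 * A s1 < q s2 * A s2 := mul_lt_mul_of_pos_left (hAm h12) hq2
    simp only []
    linarith
  have hqA_top : Tendsto (fun s => q s * A s / 2) atTop atTop := by
    have h2 : Tendsto (fun s : ℝ => q 1 * A s / 2) atTop atTop :=
      (hAtop.const_mul_atTop (hqpos 1 one_pos)).atTop_div_const two_pos
    refine tendsto_atTop_mono' atTop ?_ h2
    filter_upwards [eventually_ge_atTop (1:ℝ)] with s hs1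
    have hAs : 0 ≤ A s := hAnn s (by linarith)
    have := mul_le_mul_of_nonneg_right (hqM hs1) hAs
    linarith
  have hαtK : ClassKInf αt := by
    refine ⟨?_, ?_, ?_, ?_⟩
    · exact (((hqC.comp hPinvC).mul (hAc.comp hPinvC)).div_const 2).continuousOn
    · intro t1 h1 t2 h2 h12
      exact hqA_mono (Set.mem_Ici.2 (hPinvnn t1 h1)) (Set.mem_Ici.2 (hPinvnn t2 h2))
        (hPinvM h12)
    · simp [hαtdef, hPinv0, hA0]
    · exact hqA_top.comp hPinvT
  have hθtK : ClassKInf θt := by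
    have hM0 : 0 < (M i0)⁻¹ := inv_pos.2 (hMpos i0)
    refine ⟨continuousOn_const.mul hθ.1, ?_, ?_, ?_⟩
    · intro a ha b hb hab
      exact mul_lt_mul_of_pos_left (hθ.2.1 ha hb hab) hM0
    · simp [hθtdef, hθ.2.2.1]
    · exact hθ.2.2.2.const_mul_atTop hM0
  have hcompK : ∀ β : ℝ → ℝ, ClassKInf β → ClassKInf (fun r => ρ (β r)) := by
    intro β hβ
    refine ⟨hρ1.continuous.comp_continuousOn hβ.1, ?_, ?_, hρtop.comp hβ.2.2.2⟩
    · intro a ha b hb hab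
      exact hρsm (Set.mem_Ici.2 (Stmt10Aux.knonneg hβ ha))
        (Set.mem_Ici.2 (Stmt10Aux.knonneg hβ hb)) (hβ.2.1 ha hb hab)
    · show ρ (β 0) = 0
      rw [hβ.2.2.1, hρ0]
  refine ⟨W, fun r => ρ (αlow r), fun r => ρ (αup r), αt, θt,
    hρ1.comp hV1, fun p => hρnn _, hcompK αlow hαlow, hcompK αup hαup, hαtK, hθtK,
    ?_, ?_⟩
  · intro x z
    exact ⟨hρmono (hVb x z).1, hρmono (hVb x z).2⟩
  · intro x z u v e
    set s := V (x, z) with hsdef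
    have hs0 : 0 ≤ s := hV0 _
    have hfd : HasFDerivAt V (fderiv ℝ V (x, z)) (x, z) :=
      (hV1.differentiable one_ne_zero (x, z)).hasFDerivAt
    have hWfd : HasFDerivAt W (q s • fderiv ℝ V (x, z)) (x, z) :=
      (hρd s).comp_hasFDerivAt _ hfd
    rw [hWfd.fderiv]
    simp only [ContinuousLinearMap.smul_apply, smul_eq_mul]
    -- key per-index estimate
    have hαnn : 0 ≤ α s := Stmt10Aux.knonneg hα hs0
    have hkey : ∀ i, q s * γ i ‖e i‖ ≤ γt i ‖e i‖ + q s * α s / (2 * N) := by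
      intro i
      set a := ‖e i‖ with hadef
      have ha0 : 0 ≤ a := norm_nonneg _
      have hqs : 0 ≤ q s := hqnn s
      have hγnn : 0 ≤ γ i a := Stmt10Aux.knonneg (hγ i) ha0
      have htermnn : 0 ≤ q s * α s / (2 * N) := by positivity
      rcases le_or_gt (γ i a) (α s / (2 * N)) with hcase | hcase
      · have h1 : q s * γ i a ≤ q s * (α s / (2 * N)) := mul_le_mul_of_nonneg_left hcase hqs
        have h2 : 0 ≤ γt i a := Stmt10Aux.knonneg (hγt i) ha0
        have h3 : q s * (α s / (2 * N)) = q s * α s / (2 * N) := by ring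
        linarith
      · rcases le_or_gt (r₀ i) a with hra | hra
        · have h1 : γ i a ≤ M i * γt i a := hdom i a hra
          have h2 : q s * γ i a ≤ (M i)⁻¹ * (M i * γt i a) :=
            mul_le_mul (hqleM s i) h1 hγnn (inv_nonneg.2 (hMpos i).le)
          rw [← mul_assoc, inv_mul_cancel₀ (hMpos i).ne', one_mul] at h2
          linarith
        · set w := Ginv i (A s / (2 * N)) with hwdef
          have harg : 0 ≤ A s / (2 * N) := div_nonneg (hAnn s hs0) h2N.le
          have hw0 : 0 ≤ w := by rw [← hGinv0 i]; exact (hGinvM i).monotone harg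
          have hwa : w < a := by
            have h4 : Stmt10Aux.ext (γ i) w = A s / (2 * N) := hGinvR i _
            have h5 : Stmt10Aux.ext (γ i) w < Stmt10Aux.ext (γ i) a := by
              rw [h4, hGeq i a ha0, hAeq s hs0]; exact hcase
            exact (hGm i).lt_iff_lt.1 h5
          have h6 : Gt i w ≤ γt i a := by
            rw [hGteq i w hw0]
            exact (hγt i).2.1.monotoneOn (Set.mem_Ici.2 hw0) (Set.mem_Ici.2 ha0) hwa.le
          have h7 : γ i a ≤ c i :=
            le_trans ((hγ i).2.1.monotoneOn (Set.mem_Ici.2 ha0)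
              (Set.mem_Ici.2 (ha0.trans hra.le)) hra.le) (le_max_left _ _)
          have h8 : q s ≤ Gt i w / c i := hqleG s hs0 i
          have h9 : q s * γ i a ≤ (Gt i w / c i) * c i :=
            mul_le_mul h8 h7 hγnn (div_nonneg (hGtnn i w hw0) (hcpos i).le)
          rw [div_mul_cancel₀ _ (hcpos i).ne'] at h9
          linarith
    have hsum : ∑ i, q s * γ i ‖e i‖ ≤ (∑ i, γt i ‖e i‖) + q s * α s / 2 := by
      calc ∑ i, q s * γ i ‖e i‖ ≤ ∑ i, (γt i ‖e i‖ + q s * α s / (2 * N)) :=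
            Finset.sum_le_sum (fun i _ => hkey i)
        _ = (∑ i, γt i ‖e i‖) + N * (q s * α s / (2 * N)) := by
            rw [Finset.sum_add_distrib, Finset.sum_const, Finset.card_univ,
              Fintype.card_fin, nsmul_eq_mul]
        _ = (∑ i, γt i ‖e i‖) + q s * α s / 2 := by
            field_simp
    have hθb : q s * θ ‖v‖ ≤ (M i0)⁻¹ * θ ‖v‖ :=
      mul_le_mul_of_nonneg_right (hqleM s i0) (Stmt10Aux.knonneg hθ (norm_nonneg v))
    have hB := hVflow x z u v e
    have hD : q s * (fderiv ℝ V (x, z) (fp x u v, fo z u (h x + e) (h (ψ z)))) ≤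
        q s * (-α s + (∑ i, γ i ‖e i‖) + θ ‖v‖) :=
      mul_le_mul_of_nonneg_left hB (hqnn s)
    have hW : W (x, z) = ρ s := rfl
    rw [hW, hαtKey s hs0]
    have hexpand : q s * (-α s + (∑ i, γ i ‖e i‖) + θ ‖v‖) =
        -(q s * α s) + (∑ i, q s * γ i ‖e i‖) + q s * θ ‖v‖ := by
      rw [mul_add, mul_add, Finset.mul_sum]; ring
    simp only [hθtdef]
    linarith [hD, hsum, hθb, hexpand ▸ hD]
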